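/- arXiv:1709.09702 — 2 statements merged into one kernel-verified Lean document; each statement's English description precedes it below -/
import Mathlib

section
/- Let W_1, W_2, … be i.i.d. exponential random variables with rate 1, set Z_i = W_1 + ⋯ + W_i, and let K : ℝ≥0 → [0,1] be measurable, nonincreasing, and integrable with 0 < ∫_0^∞ K(u) du < ∞. Then the expected number of edges in the Poisson random connection model on n nodes grows linearly: lim_{n→∞} (1/n) Σ_{1≤i<j≤n} E[K(Z_j − Z_i)] = ∫_0^∞ K(u) du. In particular the graph sequence is n-sparse in expectation. -/
open MeasureTheory ProbabilityTheory Filter Real Set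
open scoped NNReal ENNReal

/-- pointwise convolution of gamma and exponential pdfs -/
lemma conv_pdf (m : ℕ) (hm : 1 ≤ m) (u : ℝ) :
    ∫⁻ x, gammaPDF (m : ℝ) 1 x * exponentialPDF 1 (u - x) = gammaPDF ((m : ℝ) + 1) 1 u := by
  rcases lt_or_ge u 0 with hu | hu
  · have hzero : ∀ x : ℝ, gammaPDF (m : ℝ) 1 x * exponentialPDF 1 (u - x) = 0 := by
      intro x
      rcases lt_or_ge x 0 with hx | hx
      · rw [gammaPDF_of_neg hx, zero_mul]
      · rw [exponentialPDF_of_neg (by linarith), mul_zero]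
    simp only [hzero, lintegral_zero, gammaPDF_of_neg hu]
  · have hmpos : (0:ℝ) < (m:ℝ) := by exact_mod_cast hm
    have hΓ : (0:ℝ) < Real.Gamma m := Real.Gamma_pos_of_pos hmpos
    set c : ℝ := Real.exp (-u) / Real.Gamma m with hcdef
    have hx' : ∀ x : ℝ, 0 ≤ x → x ^ ((m:ℝ) - 1) = x ^ (m - 1 : ℕ) := by
      intro x hx
      rw [← Real.rpow_natCast x (m-1)]
      congr 1
      push_cast [Nat.cast_sub hm]
      ring
    have hpt : ∀ x : ℝ, gammaPDF (m:ℝ) 1 x * exponentialPDF 1 (u - x)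
        = (Set.Icc (0:ℝ) u).indicator (fun x => ENNReal.ofReal (x ^ (m-1:ℕ) * c)) x := by
      intro x
      by_cases hx0 : 0 ≤ x
      · by_cases hxu : x ≤ u
        · rw [Set.indicator_of_mem (Set.mem_Icc.mpr ⟨hx0, hxu⟩),
            gammaPDF_of_nonneg hx0, exponentialPDF_of_nonneg (by linarith),
            ← ENNReal.ofReal_mul (by positivity)]
          congr 1
          have hexp : Real.exp (-(1*x)) * (1 * Real.exp (-(1*(u-x)))) = Real.exp (-u) := by
            simp only [one_mul]; rw [← Real.exp_add]; congr 1; ring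
          rw [mul_assoc, hexp, Real.one_rpow, hx' x hx0, hcdef]
          ring
        · rw [exponentialPDF_of_neg (by linarith), mul_zero,
            Set.indicator_of_notMem (by simp only [Set.mem_Icc, not_and]; intro _; linarith)]
      · rw [gammaPDF_of_neg (lt_of_not_ge hx0), zero_mul,
          Set.indicator_of_notMem (by simp only [Set.mem_Icc, not_and]; intro h; exact absurd h hx0)]
    simp only [hpt]
    rw [lintegral_indicator measurableSet_Icc]
    have hint : IntegrableOn (fun x : ℝ => x ^ (m-1:ℕ) * c) (Set.Icc 0 u) :=
      (Continuous.integrableOn_Icc (by continuity))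
    have hnn : 0 ≤ᵐ[volume.restrict (Set.Icc (0:ℝ) u)] fun x : ℝ => x ^ (m-1:ℕ) * c := by
      refine (ae_restrict_iff' measurableSet_Icc).mpr (ae_of_all _ fun x hx => ?_)
      have := hx.1
      positivity
    rw [← ofReal_integral_eq_lintegral_ofReal hint hnn]
    have hI : ∫ x in Set.Icc (0:ℝ) u, x ^ (m-1:ℕ) * c = u ^ m / m * c := by
      rw [MeasureTheory.integral_Icc_eq_integral_Ioc, ← intervalIntegral.integral_of_le hu,
        intervalIntegral.integral_mul_const, integral_pow, Nat.sub_add_cancel hm,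
        zero_pow (by omega), Nat.cast_sub hm]
      push_cast
      ring_nf
    rw [hI, gammaPDF_of_nonneg hu]
    congr 1
    rw [Real.Gamma_add_one hmpos.ne', Real.one_rpow, add_sub_cancel_right, Real.rpow_natCast,
      hcdef, one_mul]
    field_simp

lemma map_add_gamma_exp (m : ℕ) (hm : 1 ≤ m) :
    Measure.map (fun p : ℝ × ℝ => p.1 + p.2) ((gammaMeasure (m:ℝ) 1).prod (expMeasure 1)) =
      gammaMeasure ((m:ℝ) + 1) 1 := by
  have hmpos : (0:ℝ) < (m:ℝ) := by exact_mod_cast hm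
  haveI : IsProbabilityMeasure (expMeasure 1) := isProbabilityMeasure_expMeasure one_pos
  haveI : IsProbabilityMeasure (gammaMeasure (m:ℝ) 1) := isProbabilityMeasure_gammaMeasure hmpos one_pos
  have hγm : Measurable (gammaPDF (m:ℝ) 1) := (measurable_gammaPDFReal _ _).ennreal_ofReal
  have hem : Measurable (exponentialPDF 1) := (measurable_exponentialPDFReal _).ennreal_ofReal
  ext s hs
  set ind : ℝ → ℝ≥0∞ := s.indicator 1 with hind_def
  have hsm : Measurable ind := measurable_one.indicator hs
  rw [Measure.map_apply measurable_add hs,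
    ← lintegral_indicator_one (measurable_add hs)]
  have hpre : ∀ p : ℝ × ℝ, ((fun p : ℝ × ℝ => p.1 + p.2) ⁻¹' s).indicator
      (1 : ℝ × ℝ → ℝ≥0∞) p = ind (p.1 + p.2) := by
    intro p
    by_cases h : p.1 + p.2 ∈ s <;>
      simp [hind_def, Set.indicator, Set.mem_preimage, h]
  simp only [hpre]
  rw [lintegral_prod (fun p : ℝ × ℝ => ind (p.1 + p.2)) ((hsm.comp measurable_add).aemeasurable)]
  have h2 : ∀ x : ℝ, ∫⁻ y, ind (x + y) ∂(expMeasure 1)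
      = ∫⁻ v, exponentialPDF 1 (v - x) * ind v := by
    intro x
    rw [show expMeasure 1 = volume.withDensity (exponentialPDF 1) from rfl,
      lintegral_withDensity_eq_lintegral_mul volume hem (show Measurable fun y : ℝ => ind (x + y) from hsm.comp (measurable_const_add x))]
    have htrans := lintegral_add_right_eq_self
      (μ := volume) (fun v => exponentialPDF 1 (v - x) * ind v) x
    rw [← htrans]
    refine lintegral_congr fun y => ?_
    simp [add_sub_cancel_right, add_comm]
  simp only [h2]
  rw [show gammaMeasure (m:ℝ) 1 = volume.withDensity (gammaPDF (m:ℝ) 1) from rfl]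
  have hGmeas : Measurable fun p : ℝ × ℝ =>
      gammaPDF (m:ℝ) 1 p.1 * (exponentialPDF 1 (p.2 - p.1) * ind p.2) :=
    (hγm.comp measurable_fst).mul
      ((hem.comp (measurable_snd.sub measurable_fst)).mul (hsm.comp measurable_snd))
  rw [lintegral_withDensity_eq_lintegral_mul volume hγm
    (Measurable.lintegral_prod_right
      (f := fun x v => exponentialPDF 1 (v - x) * ind v)
      ((hem.comp (measurable_snd.sub measurable_fst)).mul (hsm.comp measurable_snd)))]
  have h3 : ∀ x : ℝ, (gammaPDF (m:ℝ) 1 * fun x => ∫⁻ v, exponentialPDF 1 (v - x) * ind v) x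
      = ∫⁻ v, gammaPDF (m:ℝ) 1 x * (exponentialPDF 1 (v - x) * ind v) := by
    intro x
    simp only [Pi.mul_apply]
    rw [← lintegral_const_mul _ (show Measurable fun v : ℝ => exponentialPDF 1 (v - x) * ind v from (hem.comp (measurable_sub_const x)).mul hsm)]
  simp only [h3]
  rw [lintegral_lintegral_swap hGmeas.aemeasurable]
  have h4 : ∀ v : ℝ, ∫⁻ x, gammaPDF (m:ℝ) 1 x * (exponentialPDF 1 (v - x) * ind v)
      = s.indicator (gammaPDF ((m:ℝ) + 1) 1) v := by
    intro v
    have : ∀ x : ℝ, gammaPDF (m:ℝ) 1 x * (exponentialPDF 1 (v - x) * ind v)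
        = ind v * (gammaPDF (m:ℝ) 1 x * exponentialPDF 1 (v - x)) := fun x => by ring
    simp only [this]
    rw [lintegral_const_mul _ (show Measurable fun x : ℝ => gammaPDF (m:ℝ) 1 x * exponentialPDF 1 (v - x) from hγm.mul (hem.comp (measurable_const_sub v))), conv_pdf m hm v]
    by_cases h : v ∈ s <;> simp [hind_def, Set.indicator, h]
  simp only [h4]
  rw [lintegral_indicator hs]
  rw [show gammaMeasure ((m:ℝ)+1) 1 = volume.withDensity (gammaPDF ((m:ℝ)+1) 1) from rfl,
    withDensity_apply _ hs]

/-- **The Poisson random connection model on ℝ₊ is `n`-sparse in expectation.**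
With `Z i = W 0 + ⋯ + W i` the partial sums of i.i.d. rate-1 exponentials and a
nonincreasing integrable link probability function `K` on `[0,∞)` with
`0 < ∫_0^∞ K < ∞`, the expected number of edges among the first `n` nodes,
`∑_{i<j<n} E[K (Z j − Z i)]`, satisfies
`(1/n) ∑_{i<j<n} E[K (Z j − Z i)] → ∫_0^∞ K(u) du`. -/
theorem poisson_rcm_n_sparse
    {Ω : Type*} [MeasureSpace Ω] [IsProbabilityMeasure (ℙ : Measure Ω)]
    (W : ℕ → Ω → ℝ) (hWmeas : ∀ i, Measurable (W i))
    (hWindep : iIndepFun W ℙ)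
    (hWlaw : ∀ i, Measure.map (W i) ℙ = expMeasure 1)
    (Z : ℕ → Ω → ℝ) (hZ : ∀ i ω, Z i ω = ∑ k ∈ Finset.range (i + 1), W k ω)
    (K : ℝ → ℝ) (hKmeas : Measurable K)
    (hK0 : ∀ t, 0 ≤ t → 0 ≤ K t) (hK1 : ∀ t, 0 ≤ t → K t ≤ 1)
    (hKanti : AntitoneOn K (Set.Ici (0 : ℝ)))
    (hKint : IntegrableOn K (Set.Ioi (0 : ℝ)))
    (hKpos : 0 < ∫ u in Set.Ioi (0 : ℝ), K u) :
    Tendsto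
      (fun n : ℕ =>
        (1 / (n : ℝ)) * ∑ j ∈ Finset.range n, ∑ i ∈ Finset.range j, ∫ ω, K (Z j ω - Z i ω))
      atTop (nhds (∫ u in Set.Ioi (0 : ℝ), K u)) := by
  set L := ∫ u in Set.Ioi (0:ℝ), K u with hLdef
  -- Step B: the law of the partial sums
  have hlaw : ∀ (m i : ℕ),
      Measure.map (fun ω => ∑ k ∈ Finset.Ico (i+1) (i+1+(m+1)), W k ω) ℙ
        = gammaMeasure ((m:ℝ) + 1) 1 := by
    intro m
    induction m with
    | zero =>
      intro i
      have h1 : Finset.Ico (i+1) (i+1+(0+1)) = {i+1} := by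
        rw [show i + 1 + (0 + 1) = i + 1 + 1 by omega]
        exact Nat.Ico_succ_singleton _
      simp only [h1, Finset.sum_singleton, hWlaw, Nat.cast_zero, zero_add]
      rfl
    | succ m ih =>
      intro i
      set b := i + 1 + (m + 1) with hb
      have hsum_eq : (fun ω => ∑ k ∈ Finset.Ico (i+1) (i+1+(m+1+1)), W k ω)
          = fun ω => (∑ k ∈ Finset.Ico (i+1) b, W k ω) + W b ω := by
        funext ω
        rw [show i+1+(m+1+1) = b+1 by omega, Finset.sum_Ico_succ_top (by omega)]
      set S := fun ω => ∑ k ∈ Finset.Ico (i+1) b, W k ω with hS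
      have hSmeas : Measurable S := Finset.measurable_sum _ (fun k _ => hWmeas k)
      have hindep : IndepFun S (W b) ℙ := by
        have h := hWindep.indepFun_finsetSum_of_notMem hWmeas
          (s := Finset.Ico (i+1) b) (i := b) (by simp)
        have hfeq : (∑ j ∈ Finset.Ico (i+1) b, W j) = S := by
          funext ω; rw [hS]; simp [Finset.sum_apply]
        rwa [hfeq] at h
      have hpair : Measure.map (fun ω => (S ω, W b ω)) ℙ
          = (Measure.map S ℙ).prod (Measure.map (W b) ℙ) :=
        (indepFun_iff_map_prod_eq_prod_map_map hSmeas.aemeasurable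
          (hWmeas b).aemeasurable).mp hindep
      have hcomp : (fun ω => S ω + W b ω)
          = (fun p : ℝ × ℝ => p.1 + p.2) ∘ (fun ω => (S ω, W b ω)) := rfl
      rw [hsum_eq, hcomp, ← Measure.map_map measurable_add (hSmeas.prodMk (hWmeas b)),
        hpair, ih i, hWlaw b,
        show ((m:ℝ)+1) = ((m+1:ℕ):ℝ) by push_cast; ring,
        map_add_gamma_exp (m+1) (by omega)]
  -- measurability of Z
  have hZmeas : ∀ n, Measurable (Z n) := by
    intro n
    have : Z n = fun ω => ∑ k ∈ Finset.range (n+1), W k ω := funext (hZ n)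
    rw [this]
    exact Finset.measurable_sum _ fun k _ => hWmeas k
  -- Step C: law of Z j - Z i
  have hlaw2 : ∀ i j : ℕ, i < j →
      Measure.map (fun ω => Z j ω - Z i ω) ℙ = gammaMeasure ((j - i : ℕ) : ℝ) 1 := by
    intro i j hij
    have he : (fun ω => Z j ω - Z i ω)
        = fun ω => ∑ k ∈ Finset.Ico (i+1) (i+1+((j-i-1)+1)), W k ω := by
      funext ω
      rw [show i + 1 + (j - i - 1 + 1) = j + 1 by omega, hZ, hZ,
        Finset.sum_Ico_eq_sub _ (by omega : i + 1 ≤ j + 1)]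
    rw [he, hlaw (j-i-1) i,
      show ((j-i-1 : ℕ) : ℝ) + 1 = ((j - i : ℕ) : ℝ) by
        exact_mod_cast congrArg (Nat.cast (R := ℝ)) (by omega : j-i-1+1 = j-i)]
  -- the expected-value sequence
  set g : ℕ → ℝ := fun m => ∫ x, K x ∂(gammaMeasure (m:ℝ) 1) with hgdef
  have hint : ∀ j i : ℕ, i < j → (∫ ω, K (Z j ω - Z i ω)) = g (j - i) := by
    intro j i hij
    have hm : Measurable fun ω => Z j ω - Z i ω := (hZmeas j).sub (hZmeas i)
    show _ = ∫ x, K x ∂(gammaMeasure ((j - i : ℕ) : ℝ) 1)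
    rw [← hlaw2 i j hij, integral_map hm.aemeasurable hKmeas.aestronglyMeasurable]
  -- densities
  set gE : ℕ → ℝ≥0∞ := fun m => ∫⁻ x, gammaPDF (m:ℝ) 1 x * ENNReal.ofReal (K x) with hgEdef
  have hgE_meas : ∀ m : ℕ, Measurable fun x : ℝ => gammaPDF (m:ℝ) 1 x * ENNReal.ofReal (K x) :=
    fun m => (measurable_gammaPDFReal _ _).ennreal_ofReal.mul hKmeas.ennreal_ofReal
  have hgE_le : ∀ m : ℕ, 1 ≤ m → gE m ≤ 1 := by
    intro m hm
    have hmono : ∀ x : ℝ, gammaPDF (m:ℝ) 1 x * ENNReal.ofReal (K x) ≤ gammaPDF (m:ℝ) 1 x := by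
      intro x
      rcases lt_or_ge x 0 with hx | hx
      · rw [gammaPDF_of_neg hx, zero_mul]
      · calc gammaPDF (m:ℝ) 1 x * ENNReal.ofReal (K x)
            ≤ gammaPDF (m:ℝ) 1 x * 1 :=
              mul_le_mul_right (ENNReal.ofReal_le_one.mpr (hK1 x hx)) _
          _ = gammaPDF (m:ℝ) 1 x := mul_one _
    calc gE m ≤ ∫⁻ x, gammaPDF (m:ℝ) 1 x := lintegral_mono hmono
      _ = 1 := lintegral_gammaPDF_eq_one (by exact_mod_cast hm) one_pos
  have hg_eq : ∀ m : ℕ, 1 ≤ m → g m = (gE m).toReal := by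
    intro m hm
    have hμ : gammaMeasure (m:ℝ) 1 = volume.withDensity (gammaPDF (m:ℝ) 1) := rfl
    have h0 : gammaMeasure (m:ℝ) 1 (Set.Iio 0) = 0 := by
      rw [hμ, withDensity_apply _ measurableSet_Iio]
      exact lintegral_gammaPDF_of_nonpos le_rfl
    have hae : 0 ≤ᵐ[gammaMeasure (m:ℝ) 1] K := by
      have hsub : {x : ℝ | ¬ 0 ≤ K x} ⊆ Set.Iio 0 := by
        intro x hx
        by_contra h
        exact hx (hK0 x (not_lt.mp fun hlt => h hlt))
      have : ∀ᵐ x ∂(gammaMeasure (m:ℝ) 1), 0 ≤ K x := by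
        rw [ae_iff]
        exact measure_mono_null hsub h0
      filter_upwards [this] with x hx using hx
    show (∫ x, K x ∂(gammaMeasure (m:ℝ) 1)) = _
    rw [integral_eq_lintegral_of_nonneg_ae hae hKmeas.aestronglyMeasurable]
    congr 1
    rw [hμ, lintegral_withDensity_eq_lintegral_mul volume
      (show Measurable (gammaPDF (m:ℝ) 1) from (measurable_gammaPDFReal _ _).ennreal_ofReal)
      (show Measurable fun x : ℝ => ENNReal.ofReal (K x) from hKmeas.ennreal_ofReal)]
    simp only [hgEdef, Pi.mul_apply]
  -- sum of the gamma densities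
  have hpdfsum : ∀ x : ℝ, 0 < x → (∑' m : ℕ, gammaPDF (((m+1 : ℕ)):ℝ) 1 x) = 1 := by
    intro x hx
    have hterm : ∀ m : ℕ, gammaPDF (((m+1:ℕ)):ℝ) 1 x
        = ENNReal.ofReal (x ^ m / (m.factorial : ℝ) * Real.exp (-x)) := by
      intro m
      rw [gammaPDF_of_nonneg hx.le]
      congr 1
      push_cast
      rw [Real.Gamma_nat_eq_factorial, Real.one_rpow, add_sub_cancel_right,
        Real.rpow_natCast, one_mul]
      ring
    simp only [hterm]
    rw [← ENNReal.ofReal_tsum_of_nonneg (fun m => by positivity)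
      ((Real.summable_pow_div_factorial x).mul_right _)]
    rw [tsum_mul_right, show (∑' m : ℕ, x ^ m / (m.factorial : ℝ)) = Real.exp x from ?_,
      ← Real.exp_add, add_neg_cancel, Real.exp_zero, ENNReal.ofReal_one]
    rw [Real.exp_eq_exp_ℝ, NormedSpace.exp_eq_tsum_div]
  -- a.e. identity for the series of integrands
  have hae0 : ∀ᵐ x : ℝ, (∑' m : ℕ, gammaPDF (((m+1:ℕ)):ℝ) 1 x * ENNReal.ofReal (K x))
      = (Set.Ioi (0:ℝ)).indicator (fun x => ENNReal.ofReal (K x)) x := by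
    have hne : ∀ᵐ x : ℝ, x ≠ 0 := by
      rw [ae_iff]
      have hset : {x : ℝ | ¬ x ≠ 0} = {0} := by ext x; simp [not_not]
      rw [hset]
      exact measure_singleton 0
    filter_upwards [hne] with x hx
    rcases hx.lt_or_gt with hneg | hpos
    · have : ∀ m : ℕ, gammaPDF (((m+1:ℕ)):ℝ) 1 x * ENNReal.ofReal (K x) = 0 := fun m => by
        rw [gammaPDF_of_neg hneg, zero_mul]
      simp only [this, tsum_zero]
      rw [Set.indicator_of_notMem (by simpa using hneg.not_gt)]
    · rw [ENNReal.tsum_mul_right, hpdfsum x hpos, one_mul,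
        Set.indicator_of_mem (by exact hpos)]
  have hKnn : 0 ≤ᵐ[volume.restrict (Set.Ioi (0:ℝ))] K :=
    (ae_restrict_iff' measurableSet_Ioi).mpr (ae_of_all _ fun x hx => hK0 x (le_of_lt hx))
  have htsum : (∑' m : ℕ, gE (m+1)) = ENNReal.ofReal L := by
    simp only [hgEdef]
    rw [← lintegral_tsum (fun m => (hgE_meas (m+1)).aemeasurable),
      lintegral_congr_ae hae0, lintegral_indicator measurableSet_Ioi,
      ← ofReal_integral_eq_lintegral_ofReal hKint hKnn]
  have hfin : ∀ m : ℕ, gE (m+1) ≠ ∞ := fun m =>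
    ne_top_of_le_ne_top ENNReal.one_ne_top (hgE_le (m+1) (by omega))
  have htsum_ne : (∑' m : ℕ, gE (m+1)) ≠ ∞ := by rw [htsum]; exact ENNReal.ofReal_ne_top
  have hsummable : Summable (fun m : ℕ => g (m+1)) := by
    have := ENNReal.summable_toReal htsum_ne
    refine this.congr fun m => ?_
    rw [hg_eq (m+1) (by omega)]
  have hsum_val : (∑' m : ℕ, g (m+1)) = L := by
    have h1 : (∑' m : ℕ, g (m+1)) = (∑' m : ℕ, gE (m+1)).toReal := by
      rw [ENNReal.tsum_toReal_eq hfin]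
      exact tsum_congr fun m => hg_eq (m+1) (by omega)
    rw [h1, htsum, ENNReal.toReal_ofReal (le_of_lt hKpos)]
  -- inner sums are partial sums
  have hinner : ∀ j : ℕ, ∑ i ∈ Finset.range j, ∫ ω, K (Z j ω - Z i ω)
      = ∑ m ∈ Finset.range j, g (m+1) := by
    intro j
    rw [Finset.sum_congr rfl (fun i hi => hint j i (Finset.mem_range.mp hi))]
    rw [← Finset.sum_range_reflect (fun i => g (j - i)) j]
    refine Finset.sum_congr rfl fun i hi => ?_
    have := Finset.mem_range.mp hi
    congr 1
    omega
  -- Cesàro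
  have hps : Tendsto (fun j : ℕ => ∑ m ∈ Finset.range j, g (m+1)) atTop (nhds L) := by
    have := hsummable.hasSum.tendsto_sum_nat
    rwa [hsum_val] at this
  have hces := hps.cesaro
  refine hces.congr fun n => ?_
  rw [one_div]
  congr 1
  exact Finset.sum_congr rfl fun j _ => (hinner j).symm
end

section
/- Let (S,ρ) be a metric space, μ a probability measure on S, K : ℝ≥0 → [0,1] measurable with ∫∫ K(ρ(z,z′)) dμ(z)dμ(z′) > 0, and let (s_n) be a sequence of positive reals with s_n·K(ρ(z,z′)) ≤ 1 for all z,z′ and all n. For each n define ℙⁿ on symmetric {0,1}-valued n×n matrices with zero diagonal by ℙⁿ({y}) = ∫_{Sⁿ} ∏_{1≤i<j≤n} (s_n K(ρ(z_i,z_j)))^{y_{ij}} (1−s_n K(ρ(z_i,z_j)))^{1−y_{ij}} dμ^{⊗n}(z). If s_{n₁} ≠ s_{n₂} for some n₂ > n₁ ≥ 2, then the family (ℙⁿ) is not projective: there exist n₁ < n₂ and a symmetric y ∈ {0,1}^{n₁×n₁} with zero diagonal such that ℙ^{n₁}({y}) ≠ Σ_x ℙ^{n₂}({x}), the sum ranging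 over all symmetric x ∈ {0,1}^{n₂×n₂} with zero diagonal satisfying x_{ij} = y_{ij} for 1 ≤ i,j ≤ n₁. -/
open MeasureTheory
open scoped NNReal ENNReal



lemma sum_sym_matrices {n : ℕ} (i₀ j₀ : Fin n) (hij : i₀ < j₀)
    (f : Fin n → Fin n → Bool → ℝ)
    (hsum : ∀ i j : Fin n, i < j → f i j true + f i j false = 1) :
    ∑ x ∈ Finset.univ.filter (fun x : Fin n → Fin n → Bool =>
        (∀ i j, x i j = x j i) ∧ (∀ i, x i i = false) ∧ x i₀ j₀ = true),
      ∏ i : Fin n, ∏ j ∈ Finset.Ioi i, f i j (x i j) = f i₀ j₀ true := by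
  classical
  set t : Fin n × Fin n → Finset Bool := fun p =>
    if p = (i₀, j₀) then {true} else if p.1 < p.2 then Finset.univ else {false} with ht
  set F' : (Fin n × Fin n) → Bool → ℝ := fun p b =>
    if p.1 < p.2 then f p.1 p.2 b else 1 with hF'
  have stepA :
      (∑ x ∈ Finset.univ.filter (fun x : Fin n → Fin n → Bool =>
          (∀ i j, x i j = x j i) ∧ (∀ i, x i i = false) ∧ x i₀ j₀ = true),
        ∏ i : Fin n, ∏ j ∈ Finset.Ioi i, f i j (x i j))
      = ∑ g ∈ Fintype.piFinset t, ∏ p : Fin n × Fin n, F' p (g p) := by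
    refine Finset.sum_nbij' (i := fun x (p : Fin n × Fin n) => if p.1 < p.2 then x p.1 p.2 else false)
      (j := fun g i j => if h : i < j then g (i, j) else if h' : j < i then g (j, i) else false)
      ?_ ?_ ?_ ?_ ?_
    · intro x hx
      simp only [Finset.mem_filter, Finset.mem_univ, true_and] at hx
      obtain ⟨hs, hd, h01⟩ := hx
      rw [Fintype.mem_piFinset]
      intro p
      by_cases hp : p = (i₀, j₀)
      · subst hp; simp [ht, hij, h01]
      · by_cases hlt : p.1 < p.2
        · simp [ht, hp, hlt]
        · simp [ht, hp, hlt]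
    · intro g hg
      rw [Fintype.mem_piFinset] at hg
      simp only [Finset.mem_filter, Finset.mem_univ, true_and]
      refine ⟨?_, ?_, ?_⟩
      · intro i j
        rcases lt_trichotomy i j with h | h | h
        · rw [dif_pos h, dif_neg (lt_asymm h), dif_pos h]
        · subst h; rfl
        · rw [dif_neg (lt_asymm h), dif_pos h, dif_pos h]
      · intro i
        rw [dif_neg (lt_irrefl i), dif_neg (lt_irrefl i)]
      · rw [dif_pos hij]
        have := hg (i₀, j₀)
        rw [ht] at this
        simp at this
        exact this
    · intro x hx
      simp only [Finset.mem_filter, Finset.mem_univ, true_and] at hx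
      obtain ⟨hs, hd, -⟩ := hx
      funext i j
      dsimp only
      rcases lt_trichotomy i j with h | h | h
      · rw [dif_pos h, if_pos h]
      · subst h; rw [dif_neg (lt_irrefl i), dif_neg (lt_irrefl i)]; exact (hd i).symm
      · rw [dif_neg (lt_asymm h), dif_pos h, if_pos h]; exact hs j i
    · intro g hg
      rw [Fintype.mem_piFinset] at hg
      funext p
      dsimp only
      by_cases hlt : p.1 < p.2
      · rw [if_pos hlt, dif_pos hlt]
      · rw [if_neg hlt]
        have := hg p
        rw [ht] at this
        have hp : p ≠ (i₀, j₀) := by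
          rintro rfl; exact hlt hij
        simp only [if_neg hp, if_neg hlt, Finset.mem_singleton] at this
        exact this.symm
    · intro x hx
      rw [← Finset.univ_product_univ, Finset.prod_product]
      refine Finset.prod_congr rfl fun i _ => ?_
      have : ∀ j : Fin n, F' (i, j) (if (i, j).1 < (i, j).2 then x (i,j).1 (i,j).2 else false)
          = if i < j then f i j (x i j) else 1 := by
        intro j
        by_cases h : i < j
        · simp [hF', h]
        · simp [hF', h]
      rw [Finset.prod_congr rfl fun j _ => this j, ← Finset.prod_filter]
      refine Finset.prod_congr ?_ fun _ _ => rfl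
      ext j; simp
  rw [stepA, ← Finset.prod_univ_sum t F']
  refine Finset.prod_eq_single (i₀, j₀) ?_ ?_ |>.trans ?_
  · intro p _ hp
    rw [ht]
    by_cases hlt : p.1 < p.2
    · simp only [if_neg hp, if_pos hlt]
      rw [Fintype.sum_bool]
      simp only [hF', if_pos hlt]
      exact hsum p.1 p.2 hlt
    · simp only [if_neg hp, if_neg hlt, Finset.sum_singleton, hF', if_neg hlt]
  · intro h; exact absurd (Finset.mem_univ _) h
  · rw [ht]
    simp only [if_pos rfl, Finset.sum_singleton, hF']
    simp [hij]


lemma pi_map_pair {S : Type*} [MeasurableSpace S] (μ : Measure S) [IsProbabilityMeasure μ]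
    {n : ℕ} (i₀ j₀ : Fin n) (hne : i₀ ≠ j₀) :
    (Measure.pi fun _ : Fin n => μ).map (fun z => (z i₀, z j₀)) = μ.prod μ := by
  classical
  refine (Measure.prod_eq fun u v hu hv => ?_).symm
  rw [Measure.map_apply ((measurable_pi_apply i₀).prodMk (measurable_pi_apply j₀)) (hu.prod hv)]
  have hpre : (fun z : Fin n → S => (z i₀, z j₀)) ⁻¹' (u ×ˢ v)
      = Set.pi Set.univ (fun i => if i = i₀ then u else if i = j₀ then v else Set.univ) := by
    ext z
    simp only [Set.mem_preimage, Set.mem_prod, Set.mem_pi, Set.mem_univ, true_implies]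
    constructor
    · rintro ⟨h1, h2⟩ i
      by_cases hi : i = i₀
      · subst hi; simpa using h1
      · by_cases hj : i = j₀
        · subst hj; simp [hi, h2]
        · simp [hi, hj]
    · intro h
      constructor
      · have := h i₀; simpa using this
      · have := h j₀; rw [if_neg (Ne.symm hne), if_pos rfl] at this; exact this
  rw [hpre, Measure.pi_pi]
  have hfac : ∀ i : Fin n, μ (if i = i₀ then u else if i = j₀ then v else Set.univ)
      = (if i = i₀ then μ u else if i = j₀ then μ v else 1) := by
    intro i; split_ifs <;> simp
  rw [Finset.prod_congr rfl fun i _ => hfac i]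
  rw [← Finset.mul_prod_erase _ _ (Finset.mem_univ i₀), if_pos rfl]
  rw [← Finset.mul_prod_erase _ _
      (Finset.mem_erase.mpr ⟨Ne.symm hne, Finset.mem_univ j₀⟩),
    if_neg (Ne.symm hne), if_pos rfl]
  have hrest : (∏ i ∈ (Finset.univ.erase i₀).erase j₀,
      (if i = i₀ then μ u else if i = j₀ then μ v else 1)) = 1 := by
    refine Finset.prod_eq_one fun i hi => ?_
    obtain ⟨hij0, hi2⟩ := Finset.mem_erase.mp hi
    obtain ⟨hii0, -⟩ := Finset.mem_erase.mp hi2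
    rw [if_neg hii0, if_neg hij0]
  rw [hrest, mul_one]

lemma integral_pair_K {S : Type*} [MetricSpace S] [MeasurableSpace S]
    (μ : Measure S) [IsProbabilityMeasure μ] (K : ℝ≥0 → ℝ)
    (HI : Integrable (fun p : S × S => K (nndist p.1 p.2)) (μ.prod μ))
    {n : ℕ} (i₀ j₀ : Fin n) (hne : i₀ ≠ j₀) :
    ∫ z : Fin n → S, K (nndist (z i₀) (z j₀)) ∂(Measure.pi fun _ : Fin n => μ)
      = ∫ z, ∫ z', K (nndist z z') ∂μ ∂μ := by
  have hmap := pi_map_pair μ i₀ j₀ hne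
  have hmeas : Measurable (fun z : Fin n → S => (z i₀, z j₀)) :=
    (measurable_pi_apply i₀).prodMk (measurable_pi_apply j₀)
  have h1 : ∫ p : S × S, K (nndist p.1 p.2) ∂(μ.prod μ)
      = ∫ z : Fin n → S, K (nndist (z i₀) (z j₀)) ∂(Measure.pi fun _ : Fin n => μ) := by
    rw [← hmap]
    exact integral_map hmeas.aemeasurable (by rw [hmap]; exact HI.1)
  rw [← h1]
  exact integral_prod _ HI

lemma integrand_integrable {S : Type*} [MetricSpace S] [MeasurableSpace S]
    (μ : Measure S) [IsProbabilityMeasure μ] (K : ℝ≥0 → ℝ) (hK0 : ∀ t, 0 ≤ K t)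
    (HI : Integrable (fun p : S × S => K (nndist p.1 p.2)) (μ.prod μ))
    (c : ℝ) (hc : 0 < c) (hcK : ∀ z z' : S, c * K (nndist z z') ≤ 1)
    {n : ℕ} (x : Fin n → Fin n → Bool) :
    Integrable (fun z : Fin n → S =>
      ∏ i : Fin n, ∏ j ∈ Finset.Ioi i,
        (if x i j then c * K (nndist (z i) (z j))
         else 1 - c * K (nndist (z i) (z j)))) (Measure.pi fun _ : Fin n => μ) := by
  have hKae : ∀ (i j : Fin n), i ≠ j →
      AEStronglyMeasurable (fun z : Fin n → S => K (nndist (z i) (z j)))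
        (Measure.pi fun _ : Fin n => μ) := by
    intro i j hij
    have h1 : AEStronglyMeasurable (fun p : S × S => K (nndist p.1 p.2))
        ((Measure.pi fun _ : Fin n => μ).map (fun z => (z i, z j))) := by
      rw [pi_map_pair μ i j hij]; exact HI.1
    exact h1.comp_measurable ((measurable_pi_apply i).prodMk (measurable_pi_apply j))
  have haesm : AEStronglyMeasurable (fun z : Fin n → S =>
      ∏ i : Fin n, ∏ j ∈ Finset.Ioi i,
        (if x i j then c * K (nndist (z i) (z j))
         else 1 - c * K (nndist (z i) (z j)))) (Measure.pi fun _ : Fin n => μ) := by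
    refine Finset.aestronglyMeasurable_fun_prod _ fun i _ => ?_
    refine Finset.aestronglyMeasurable_fun_prod _ fun j hj => ?_
    have hlt : i < j := Finset.mem_Ioi.mp hj
    cases hx : x i j
    · simpa [hx, Pi.sub_def] using (aestronglyMeasurable_const.sub ((hKae i j hlt.ne).const_mul c))
    · simpa [hx] using ((hKae i j hlt.ne).const_mul c)
  have hfac01 : ∀ (z : Fin n → S) (i j : Fin n),
      0 ≤ (if x i j then c * K (nndist (z i) (z j)) else 1 - c * K (nndist (z i) (z j)))
      ∧ (if x i j then c * K (nndist (z i) (z j)) else 1 - c * K (nndist (z i) (z j))) ≤ 1 := by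
    intro z i j
    have h0 : 0 ≤ c * K (nndist (z i) (z j)) := mul_nonneg hc.le (hK0 _)
    have h1 : c * K (nndist (z i) (z j)) ≤ 1 := hcK _ _
    cases hx : x i j <;> simp [hx] <;> constructor <;> linarith
  refine Integrable.mono' (integrable_const (1 : ℝ)) haesm (Filter.Eventually.of_forall fun z => ?_)
  rw [Real.norm_eq_abs, abs_of_nonneg]
  · refine Finset.prod_le_one (fun i _ => Finset.prod_nonneg fun j _ => (hfac01 z i j).1)
      (fun i _ => Finset.prod_le_one (fun j _ => (hfac01 z i j).1) (fun j _ => (hfac01 z i j).2))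
  · exact Finset.prod_nonneg fun i _ => Finset.prod_nonneg fun j _ => (hfac01 z i j).1

lemma edge_marginal {S : Type*} [MetricSpace S] [MeasurableSpace S]
    (μ : Measure S) [IsProbabilityMeasure μ]
    (K : ℝ≥0 → ℝ) (hK0 : ∀ t, 0 ≤ K t)
    (HI : Integrable (fun p : S × S => K (nndist p.1 p.2)) (μ.prod μ))
    (c : ℝ) (hc : 0 < c) (hcK : ∀ z z' : S, c * K (nndist z z') ≤ 1)
    {n : ℕ} (i₀ j₀ : Fin n) (hij : i₀ < j₀) :
    (∑ x ∈ Finset.univ.filter (fun x : Fin n → Fin n → Bool =>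
        (∀ i j, x i j = x j i) ∧ (∀ i, x i i = false) ∧ x i₀ j₀ = true),
      ∫ z : Fin n → S,
        ∏ i : Fin n, ∏ j ∈ Finset.Ioi i,
          (if x i j then c * K (nndist (z i) (z j))
           else 1 - c * K (nndist (z i) (z j))) ∂(Measure.pi fun _ : Fin n => μ))
      = c * ∫ z, ∫ z', K (nndist z z') ∂μ ∂μ := by
  classical
  rw [← integral_finset_sum _ fun x _ => integrand_integrable μ K hK0 HI c hc hcK x]
  have hpt : ∀ z : Fin n → S,
      (∑ x ∈ Finset.univ.filter (fun x : Fin n → Fin n → Bool =>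
          (∀ i j, x i j = x j i) ∧ (∀ i, x i i = false) ∧ x i₀ j₀ = true),
        ∏ i : Fin n, ∏ j ∈ Finset.Ioi i,
          (if x i j then c * K (nndist (z i) (z j))
           else 1 - c * K (nndist (z i) (z j))))
      = c * K (nndist (z i₀) (z j₀)) := by
    intro z
    exact sum_sym_matrices i₀ j₀ hij
      (fun i j b => if b then c * K (nndist (z i) (z j)) else 1 - c * K (nndist (z i) (z j)))
      (fun i j _ => by simp)
  rw [integral_congr_ae (Filter.Eventually.of_forall hpt)]
  rw [MeasureTheory.integral_const_mul]
  rw [integral_pair_K μ K HI i₀ j₀ hij.ne]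

/-- **Sparse graphon-based latent position models are not projective.**
With i.i.d. latent positions from `μ` and link probability `s_n · K(ρ(z_i,z_j))` for
a graph on `n` nodes, if the sparsity sequence is not constant (there are
`n₂ > n₁ ≥ 2` with `s_{n₁} ≠ s_{n₂}`) and `∫∫ K dμ dμ > 0`, then the family of graph
distributions fails projectivity. -/
theorem sparse_graphon_lpm_not_projective
    {S : Type*} [MetricSpace S] [MeasurableSpace S] [BorelSpace S]
    (μ : Measure S) [IsProbabilityMeasure μ]
    (K : ℝ≥0 → ℝ) (hKmeas : Measurable K) (hK0 : ∀ t, 0 ≤ K t)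
    (hKpos : 0 < ∫ z, ∫ z', K (nndist z z') ∂μ ∂μ)
    (s : ℕ → ℝ) (hspos : ∀ n, 0 < s n)
    (hsK : ∀ (n : ℕ) (z z' : S), s n * K (nndist z z') ≤ 1)
    (P : (n : ℕ) → (Fin n → Fin n → Bool) → ℝ)
    (hP : ∀ (n : ℕ) (y : Fin n → Fin n → Bool),
      P n y = ∫ z : Fin n → S,
        ∏ i : Fin n, ∏ j ∈ Finset.Ioi i,
          (if y i j then s n * K (nndist (z i) (z j))
           else 1 - s n * K (nndist (z i) (z j)))
        ∂(Measure.pi fun _ : Fin n => μ))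
    (hnonconst : ∃ n₁ n₂ : ℕ, 2 ≤ n₁ ∧ n₁ < n₂ ∧ s n₁ ≠ s n₂) :
    ∃ (n₁ n₂ : ℕ) (hn : n₁ < n₂) (y : Fin n₁ → Fin n₁ → Bool),
      (∀ i j, y i j = y j i) ∧ (∀ i, y i i = false) ∧
      P n₁ y ≠
        ∑ x ∈ Finset.univ.filter (fun x : Fin n₂ → Fin n₂ → Bool =>
            (∀ i j, x i j = x j i) ∧ (∀ i, x i i = false) ∧
            (∀ i j : Fin n₁, x (Fin.castLE hn.le i) (Fin.castLE hn.le j) = y i j)),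
          P n₂ x := by
  classical
  obtain ⟨n₁, n₂, h2, hlt, hsne⟩ := hnonconst
  by_contra hcon
  push_neg at hcon
  by_cases HI : Integrable (fun p : S × S => K (nndist p.1 p.2)) (μ.prod μ)
  · -- good case: the usual marginal computation gives a contradiction
    have hI : (∫ z, ∫ z', K (nndist z z') ∂μ ∂μ) ≠ 0 := ne_of_gt hKpos
    set i₀ : Fin n₁ := ⟨0, by omega⟩ with hi₀
    set j₀ : Fin n₁ := ⟨1, by omega⟩ with hj₀
    have hij : i₀ < j₀ := by simp [hi₀, hj₀, Fin.lt_def]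
    set I₀ : Fin n₂ := ⟨0, by omega⟩ with hI₀
    set J₀ : Fin n₂ := ⟨1, by omega⟩ with hJ₀
    have hIJ : I₀ < J₀ := by simp [hI₀, hJ₀, Fin.lt_def]
    set Y := Finset.univ.filter (fun y : Fin n₁ → Fin n₁ → Bool =>
        (∀ i j, y i j = y j i) ∧ (∀ i, y i i = false) ∧ y i₀ j₀ = true) with hY
    set X := Finset.univ.filter (fun x : Fin n₂ → Fin n₂ → Bool =>
        (∀ i j, x i j = x j i) ∧ (∀ i, x i i = false) ∧ x I₀ J₀ = true) with hX
    have hsum1 : ∑ y ∈ Y, P n₁ y = s n₁ * ∫ z, ∫ z', K (nndist z z') ∂μ ∂μ := by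
      rw [Finset.sum_congr rfl fun y _ => hP n₁ y]
      exact edge_marginal μ K hK0 HI (s n₁) (hspos n₁) (hsK n₁) i₀ j₀ hij
    have hsum2 : ∑ x ∈ X, P n₂ x = s n₂ * ∫ z, ∫ z', K (nndist z z') ∂μ ∂μ := by
      rw [Finset.sum_congr rfl fun x _ => hP n₂ x]
      exact edge_marginal μ K hK0 HI (s n₂) (hspos n₂) (hsK n₂) I₀ J₀ hIJ
    have hmapsto : ∀ x ∈ X, (fun i j : Fin n₁ => x (Fin.castLE hlt.le i) (Fin.castLE hlt.le j)) ∈ Y := by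
      intro x hx
      rw [hX, Finset.mem_filter] at hx
      obtain ⟨-, hs', hd', h01⟩ := hx
      rw [hY, Finset.mem_filter]
      exact ⟨Finset.mem_univ _, fun i j => hs' _ _, fun i => hd' _, h01⟩
    have hfib := Finset.sum_fiberwise_of_maps_to hmapsto (P n₂)
    have hYX : ∀ y ∈ Y, P n₁ y
        = ∑ x ∈ X.filter (fun x =>
            (fun i j : Fin n₁ => x (Fin.castLE hlt.le i) (Fin.castLE hlt.le j)) = y), P n₂ x := by
      intro y hy
      rw [hY, Finset.mem_filter] at hy
      obtain ⟨-, hys, hyd, hy01⟩ := hy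
      rw [hcon n₁ n₂ hlt y hys hyd]
      refine Finset.sum_congr ?_ fun _ _ => rfl
      ext x
      simp only [Finset.mem_filter, Finset.mem_univ, true_and, hX]
      constructor
      · rintro ⟨hs', hd', hr⟩
        refine ⟨⟨hs', hd', ?_⟩, ?_⟩
        · have h' := hr i₀ j₀
          rw [hy01] at h'
          exact h'
        · funext i j; exact hr i j
      · rintro ⟨⟨hs', hd', -⟩, hr⟩
        exact ⟨hs', hd', fun i j => congrFun (congrFun hr i) j⟩
    have hkey : s n₁ * (∫ z, ∫ z', K (nndist z z') ∂μ ∂μ)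
        = s n₂ * ∫ z, ∫ z', K (nndist z z') ∂μ ∂μ := by
      rw [← hsum1, ← hsum2, ← hfib]
      exact Finset.sum_congr rfl hYX
    exact hsne (mul_right_cancel₀ hI hkey)
  · -- bad case: the model is not even defined (integrals vanish); use n₁ = 1, n₂ = 2
    have h12 : (1 : ℕ) < 2 := by norm_num
    have hIoi1 : ∀ i : Fin 1, Finset.Ioi i = (∅ : Finset (Fin 1)) := by decide
    have hP1 : P 1 (fun _ _ => false) = 1 := by
      rw [hP]
      simp [hIoi1]
    have hKpi : ¬ Integrable (fun z : Fin 2 → S => K (nndist (z 0) (z 1)))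
        (Measure.pi fun _ : Fin 2 => μ) := by
      intro h
      apply HI
      have hmp := MeasureTheory.measurePreserving_piFinTwo (fun _ : Fin 2 => μ)
      rw [← hmp.map_eq]
      rw [MeasureTheory.integrable_map_equiv]
      exact h
    have hKpi' : ¬ Integrable (fun z : Fin 2 → S => s 2 * K (nndist (z 0) (z 1)))
        (Measure.pi fun _ : Fin 2 => μ) := by
      intro h
      have h' := h.const_mul (s 2)⁻¹
      simp only [← mul_assoc, inv_mul_cancel₀ (ne_of_gt (hspos 2)), one_mul] at h'
      exact hKpi h'
    have hP2 : ∀ x : Fin 2 → Fin 2 → Bool, P 2 x = 0 := by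
      intro x
      rw [hP]
      have hIoi0 : Finset.Ioi (0 : Fin 2) = {1} := by decide
      have hIoi1' : Finset.Ioi (1 : Fin 2) = (∅ : Finset (Fin 2)) := by decide
      simp only [Fin.prod_univ_two, hIoi0, hIoi1', Finset.prod_singleton, Finset.prod_empty,
        mul_one]
      cases hx : x 0 1
      · simp only [Bool.false_eq_true, if_false]
        refine integral_undef fun h => ?_
        have h' := (integrable_const (1 : ℝ)).sub h
        refine hKpi' ?_
        have heq : ((fun _ : Fin 2 → S => (1 : ℝ)) - fun z : Fin 2 → S =>
            1 - s 2 * K (nndist (z 0) (z 1)))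
            = fun z : Fin 2 → S => s 2 * K (nndist (z 0) (z 1)) := by
          funext z; simp
        rwa [heq] at h'
      · simp only [if_true]
        exact integral_undef hKpi'
    have hkey := hcon 1 2 h12 (fun _ _ => false) (fun _ _ => rfl) (fun _ => rfl)
    rw [hP1, Finset.sum_eq_zero (fun x _ => hP2 x)] at hkey
    exact one_ne_zero hkey
end
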